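/- Let λ be a strong limit cardinal, i.e. an infinite cardinal such that 2^μ < λ for every cardinal μ < λ. Then there exists a simple graph G with vertex set of cardinality λ such that: (1) G has no proper coloring with colors in a set of cardinality strictly less than λ; (2) G is triangle-free, i.e. contains no clique of size 3; (3) the edge relation of G is stable: there exists n < ω such that G contains no half-graph of height n; and (4) the first-order theory of G (in the language of graphs) is unstable: there exist a first-order formula φ(x̄, ȳ) in the language of graphs and, for every k < ω, tuples ā_0,…,ā_{k−1}, b̄_0,…,b̄_{k−1} of vertices of G such that G ⊨ φ(ā_i, b̄_j) if and only if i < j. -/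

import Mathlib

open Cardinal FirstOrder FirstOrder.Language

/-- `G` contains a half-graph of height `n`: vertices `a_0, …, a_{n-1}`, `b_0, …, b_{n-1}`
with `a_i` adjacent to `b_j` iff `i < j`. -/
def ContainsHalfGraph {V : Type} (G : SimpleGraph V) (n : ℕ) : Prop :=
  ∃ a b : Fin n → V, ∀ i j : Fin n, G.Adj (a i) (b j) ↔ i < j

/-! ### Auxiliary construction: the shift graph on pairs

The vertex set consists of ordered pairs `(x, y)` with `x < y` from a linear order `Alp lam`
of cardinality `lam`, and `(x, y)` is adjacent to `(y, z)`. -/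

/-- The underlying linear order: `ℕ` followed by the ordinal `lam.ord`. -/
abbrev Alp (lam : Cardinal) : Type := ℕ ⊕ₗ (Cardinal.ord lam).ToType

/-- Vertices: increasing pairs. -/
abbrev Vtx (lam : Cardinal) : Type := {p : Alp lam × Alp lam // p.1 < p.2}

/-- The shift graph. -/
def Gr (lam : Cardinal) : SimpleGraph (Vtx lam) where
  Adj u v := u ≠ v ∧ (u.1.2 = v.1.1 ∨ v.1.2 = u.1.1)
  symm := ⟨by rintro u v ⟨h1, h2⟩; exact ⟨h1.symm, h2.symm⟩⟩
  loopless := ⟨fun u h => h.1 rfl⟩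

lemma mk_Alp {lam : Cardinal} (hlam : ℵ₀ ≤ lam) : #(Alp lam) = lam := by
  have h1 : #(Alp lam) = #(ℕ ⊕ (Cardinal.ord lam).ToType) := rfl
  rw [h1, Cardinal.mk_sum, Cardinal.lift_id, Cardinal.lift_id, Cardinal.mk_nat,
    Cardinal.mk_toType, Cardinal.card_ord]
  exact Cardinal.add_eq_right hlam hlam

lemma mk_Vtx {lam : Cardinal} (hlam : ℵ₀ ≤ lam) : #(Vtx lam) = lam := by
  apply le_antisymm
  · calc #(Vtx lam) ≤ #(Alp lam × Alp lam) := Cardinal.mk_subtype_le _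
      _ = lam * lam := by rw [Cardinal.mk_prod]; simp [mk_Alp hlam]
      _ = lam := Cardinal.mul_eq_self hlam
  · have hf : Function.Injective (fun x : (Cardinal.ord lam).ToType =>
        (⟨(toLex (Sum.inl 0), toLex (Sum.inr x)), Sum.Lex.inl_lt_inr _ _⟩ : Vtx lam)) := by
      intro x y hxy
      have h2 := congrArg (fun w : Vtx lam => w.1.2) hxy
      simpa using h2
    calc lam = #((Cardinal.ord lam).ToType) := by rw [Cardinal.mk_toType, Cardinal.card_ord]
      _ ≤ #(Vtx lam) := Cardinal.mk_le_of_injective hf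

/-- Any finite list in a linear order can be mapped to `ℕ` preserving `<` and `=`
on its members. -/
lemma listEmbed {α : Type*} [LinearOrder α] (L : List α) :
    ∃ g : α → ℕ, ∀ x ∈ L, ∀ y ∈ L, (x < y ↔ g x < g y) ∧ (x = y ↔ g x = g y) := by
  classical
  refine ⟨fun x => (L.toFinset.filter (fun z => z < x)).card, ?_⟩
  have key : ∀ x ∈ L, ∀ y ∈ L, x < y →
      (L.toFinset.filter (fun z => z < x)).card < (L.toFinset.filter (fun z => z < y)).card := by
    intro x hx y hy hxy
    apply Finset.card_lt_card
    have hsub : L.toFinset.filter (fun z => z < x) ⊆ L.toFinset.filter (fun z => z < y) := by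
      intro z hz
      simp only [Finset.mem_filter] at hz ⊢
      exact ⟨hz.1, hz.2.trans hxy⟩
    rw [Finset.ssubset_iff_of_subset hsub]
    exact ⟨x, by simp [Finset.mem_filter, List.mem_toFinset.2 hx, hxy], by simp [Finset.mem_filter]⟩
  intro x hx y hy
  constructor
  · constructor
    · exact key x hx y hy
    · intro hgl
      by_contra hxy
      rcases (not_lt.1 hxy).lt_or_eq with h' | h'
      · exact lt_asymm hgl (key y hy x hx h')
      · subst h'; exact lt_irrefl _ hgl
  · constructor
    · rintro rfl; rfl
    · intro hge
      by_contra hne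
      rcases lt_or_gt_of_ne hne with h' | h'
      · exact (key x hx y hy h').ne hge
      · exact (key y hy x hx h').ne' hge

/-- (1) no proper coloring with fewer than `lam` colors. -/
lemma no_coloring {lam : Cardinal} (hlam : ℵ₀ ≤ lam)
    (hstronglimit : ∀ μ : Cardinal, μ < lam → 2 ^ μ < lam) :
    ¬ ∃ (C : Type) (c : Vtx lam → C), #C < lam ∧
      ∀ x y : Vtx lam, (Gr lam).Adj x y → c x ≠ c y := by
  rintro ⟨C, c, hC, hc⟩
  set F : Alp lam → Set C := fun x => {γ : C | ∃ y, ∃ h : x < y, c ⟨(x, y), h⟩ = γ} with hF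
  have key : ∀ x y : Alp lam, x < y → F x ≠ F y := by
    intro x y hxy hFeq
    have hmem : c ⟨(x, y), hxy⟩ ∈ F x := ⟨y, hxy, rfl⟩
    rw [hFeq] at hmem
    obtain ⟨z, hyz, hcz⟩ := hmem
    have hadj : (Gr lam).Adj ⟨(x, y), hxy⟩ ⟨(y, z), hyz⟩ := by
      refine ⟨?_, Or.inl rfl⟩
      intro hEq
      have := congrArg (fun w : Vtx lam => w.1.1) hEq
      simp only at this
      exact absurd this (ne_of_lt hxy)
    exact hc _ _ hadj hcz.symm
  have hinj : Function.Injective F := by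
    intro x y hFeq
    by_contra hne
    rcases lt_or_gt_of_ne hne with h' | h'
    · exact key x y h' hFeq
    · exact key y x h' hFeq.symm
  have hle : lam ≤ 2 ^ #C := by
    calc lam = #(Alp lam) := (mk_Alp hlam).symm
      _ ≤ #(Set C) := Cardinal.mk_le_of_injective hinj
      _ = 2 ^ #C := Cardinal.mk_set
  exact (hstronglimit #C hC).not_ge hle

/-- (2) triangle-free. -/
lemma tri_free {lam : Cardinal} :
    ¬ ∃ x y z : Vtx lam, (Gr lam).Adj x y ∧ (Gr lam).Adj y z ∧ (Gr lam).Adj x z := by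
  rintro ⟨x, y, z, ⟨-, h1⟩, ⟨-, h2⟩, ⟨-, h3⟩⟩
  obtain ⟨g, hg⟩ := listEmbed [x.1.1, x.1.2, y.1.1, y.1.2, z.1.1, z.1.2]
  have e1 : g x.1.2 = g y.1.1 ∨ g y.1.2 = g x.1.1 :=
    h1.imp (fun e => ((hg _ (by simp) _ (by simp)).2).mp e)
      (fun e => ((hg _ (by simp) _ (by simp)).2).mp e)
  have e2 : g y.1.2 = g z.1.1 ∨ g z.1.2 = g y.1.1 :=
    h2.imp (fun e => ((hg _ (by simp) _ (by simp)).2).mp e)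
      (fun e => ((hg _ (by simp) _ (by simp)).2).mp e)
  have e3 : g x.1.2 = g z.1.1 ∨ g z.1.2 = g x.1.1 :=
    h3.imp (fun e => ((hg _ (by simp) _ (by simp)).2).mp e)
      (fun e => ((hg _ (by simp) _ (by simp)).2).mp e)
  have o1 : g x.1.1 < g x.1.2 := ((hg _ (by simp) _ (by simp)).1).mp x.2
  have o2 : g y.1.1 < g y.1.2 := ((hg _ (by simp) _ (by simp)).1).mp y.2
  have o3 : g z.1.1 < g z.1.2 := ((hg _ (by simp) _ (by simp)).1).mp z.2
  omega

/-- (3) the edge relation has no half-graph of height 5. -/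
lemma no_half {lam : Cardinal} : ¬ ContainsHalfGraph (Gr lam) 5 := by
  rintro ⟨a, b, h⟩
  set L : List (Alp lam) :=
    (List.finRange 5).flatMap (fun i => [(a i).1.1, (a i).1.2, (b i).1.1, (b i).1.2]) with hLdef
  obtain ⟨g, hg⟩ := listEmbed L
  have hL : ∀ i : Fin 5, (a i).1.1 ∈ L ∧ (a i).1.2 ∈ L ∧ (b i).1.1 ∈ L ∧ (b i).1.2 ∈ L := by
    intro i
    rw [hLdef]
    refine ⟨?_, ?_, ?_, ?_⟩ <;>
      exact List.mem_flatMap.mpr ⟨i, List.mem_finRange i, by simp⟩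
  have hv : ∀ i : Fin 5, g (a i).1.1 < g (a i).1.2 :=
    fun i => ((hg _ (hL i).1 _ (hL i).2.1).1).mp (a i).2
  have hw : ∀ i : Fin 5, g (b i).1.1 < g (b i).1.2 :=
    fun i => ((hg _ (hL i).2.2.1 _ (hL i).2.2.2).1).mp (b i).2
  have he : ∀ i j : Fin 5, i < j →
      (g (a i).1.2 = g (b j).1.1 ∨ g (b j).1.2 = g (a i).1.1) := by
    intro i j hij
    rcases ((h i j).mpr hij).2 with h' | h'
    · exact Or.inl (((hg _ (hL i).2.1 _ (hL j).2.2.1).2).mp h')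
    · exact Or.inr (((hg _ (hL j).2.2.2 _ (hL i).1).2).mp h')
  have hne : ∀ i j : Fin 5, ¬ i < j →
      ((g (a i).1.1 = g (b j).1.1 ∧ g (a i).1.2 = g (b j).1.2) ∨
       (g (a i).1.2 ≠ g (b j).1.1 ∧ g (b j).1.2 ≠ g (a i).1.1)) := by
    intro i j hij
    have hna : ¬ (Gr lam).Adj (a i) (b j) := fun hadj => hij ((h i j).mp hadj)
    by_cases heq : a i = b j
    · left
      have h1 : (a i).1.1 = (b j).1.1 := by rw [heq]
      have h2 : (a i).1.2 = (b j).1.2 := by rw [heq]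
      exact ⟨((hg _ (hL i).1 _ (hL j).2.2.1).2).mp h1,
        ((hg _ (hL i).2.1 _ (hL j).2.2.2).2).mp h2⟩
    · right
      constructor
      · intro hgq
        exact hna ⟨heq, Or.inl (((hg _ (hL i).2.1 _ (hL j).2.2.1).2).mpr hgq)⟩
      · intro hgs
        exact hna ⟨heq, Or.inr (((hg _ (hL j).2.2.2 _ (hL i).1).2).mpr hgs)⟩
  have E01 := he 0 1 (by decide)
  have E02 := he 0 2 (by decide)
  have E04 := he 0 4 (by decide)
  have E12 := he 1 2 (by decide)
  have E13 := he 1 3 (by decide)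
  have E14 := he 1 4 (by decide)
  have E23 := he 2 3 (by decide)
  have E24 := he 2 4 (by decide)
  have E34 := he 3 4 (by decide)
  have N11 := hne 1 1 (by decide)
  have N22 := hne 2 2 (by decide)
  have N33 := hne 3 3 (by decide)
  have V0 := hv 0
  have V1 := hv 1
  have V2 := hv 2
  have V3 := hv 3
  have V4 := hv 4
  have W0 := hw 0
  have W1 := hw 1
  have W2 := hw 2
  have W3 := hw 3
  have W4 := hw 4
  omega

/-- the formula `∃ z, E(x, z) ∧ E(z, y)` -/
def phi : Language.graph.Formula (Fin 1 ⊕ Fin 1) :=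
  BoundedFormula.ex
    ((adj.boundedFormula₂ (Term.var (Sum.inl (Sum.inl 0))) (&0)) ⊓
     (adj.boundedFormula₂ (&0) (Term.var (Sum.inl (Sum.inr 0)))))

lemma realize_phi {V : Type} (G : SimpleGraph V) (v : (Fin 1 ⊕ Fin 1) → V) :
    (@Formula.Realize Language.graph V G.structure _ phi v) ↔
      ∃ z : V, G.Adj (v (Sum.inl 0)) z ∧ G.Adj z (v (Sum.inr 0)) := by
  letI := G.structure
  have hrel : ∀ x y : V, Structure.RelMap (L := Language.graph) adj ![x, y] ↔ G.Adj x y :=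
    fun x y => Iff.rfl
  simp [phi, Formula.Realize, BoundedFormula.realize_ex, BoundedFormula.realize_inf,
    BoundedFormula.realize_rel₂, Term.realize_var, Fin.snoc, hrel]

/-- (4) `phi` has the order property in the shift graph. -/
lemma order_prop {lam : Cardinal} (k : ℕ) :
    ∃ (a : Fin k → Fin 1 → Vtx lam) (b : Fin k → Fin 1 → Vtx lam),
      ∀ i j : Fin k,
        (@Formula.Realize Language.graph (Vtx lam) (Gr lam).structure _ phi
          (Sum.elim (a i) (b j))) ↔ i < j := by
  have hNinj : ∀ m n : ℕ, (toLex (Sum.inl m) : Alp lam) = toLex (Sum.inl n) → m = n := by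
    intro m n hmn
    have := congrArg ofLex hmn
    simpa using this
  refine ⟨fun i _ => ⟨(toLex (Sum.inl (2 * i.1)), toLex (Sum.inl (2 * i.1 + 2))),
      Sum.Lex.inl_lt_inl_iff.mpr (by omega)⟩,
    fun j _ => ⟨(toLex (Sum.inl (2 * j.1 + 1)), toLex (Sum.inl (2 * k + 3))),
      Sum.Lex.inl_lt_inl_iff.mpr (by omega)⟩, ?_⟩
  intro i j
  rw [realize_phi]
  constructor
  · rintro ⟨⟨⟨z1, z2⟩, hz⟩, ⟨hne1, h1⟩, ⟨hne2, h2⟩⟩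
    by_contra hij
    have hij' : j.1 ≤ i.1 := Fin.le_def.mp (Fin.not_lt.mp hij)
    have hik : i.1 < k := i.isLt
    simp only at h1 h2
    rcases h1 with h1 | h1 <;> rcases h2 with h2 | h2
    · rw [← h1, h2] at hz
      have := Sum.Lex.inl_lt_inl_iff.mp hz
      omega
    · rw [← h1] at h2
      have := hNinj _ _ h2
      omega
    · rw [h1] at h2
      have := hNinj _ _ h2
      omega
    · rw [← h2, h1] at hz
      have := Sum.Lex.inl_lt_inl_iff.mp hz
      have hjk : j.1 < k := j.isLt
      omega
  · intro hij
    have hij' : i.1 < j.1 := Fin.lt_def.mp hij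
    refine ⟨⟨(toLex (Sum.inl (2 * i.1 + 2)), toLex (Sum.inl (2 * j.1 + 1))),
        Sum.Lex.inl_lt_inl_iff.mpr (by omega)⟩, ⟨?_, Or.inl rfl⟩, ⟨?_, Or.inl rfl⟩⟩
    · intro hEq
      have := congrArg (fun w : Vtx lam => w.1.1) hEq
      simp only at this
      have := hNinj _ _ this
      omega
    · intro hEq
      have := congrArg (fun w : Vtx lam => w.1.1) hEq
      simp only at this
      have := hNinj _ _ this
      omega

theorem stmt_4 (lam : Cardinal) (hlam : ℵ₀ ≤ lam)
    (hstronglimit : ∀ μ : Cardinal, μ < lam → 2 ^ μ < lam) :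
    ∃ (V : Type) (G : SimpleGraph V), #V = lam ∧
      -- (1) no proper coloring with fewer than `lam` colors
      (¬ ∃ (C : Type) (c : V → C), #C < lam ∧ ∀ x y : V, G.Adj x y → c x ≠ c y) ∧
      -- (2) triangle-free
      (¬ ∃ x y z : V, G.Adj x y ∧ G.Adj y z ∧ G.Adj x z) ∧
      -- (3) the edge relation is stable
      (∃ n : ℕ, ¬ ContainsHalfGraph G n) ∧
      -- (4) the first-order theory of `G` is unstable: some formula has the order property in `G`
      (∃ (p q : ℕ) (φ : Language.graph.Formula (Fin p ⊕ Fin q)),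
        ∀ k : ℕ, ∃ (a : Fin k → Fin p → V) (b : Fin k → Fin q → V),
          ∀ i j : Fin k,
            (@Formula.Realize Language.graph V G.structure _ φ (Sum.elim (a i) (b j))) ↔ i < j) := by
  exact ⟨Vtx lam, Gr lam, mk_Vtx hlam, no_coloring hlam hstronglimit, tri_free,
    ⟨5, no_half⟩, ⟨1, 1, phi, fun k => order_prop k⟩⟩
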